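/- Let W: X → [0,∞) be any measurable function and let η > 0. Then for every x ∉ C_η, the independence sampler kernel satisfies PW(x) − W(x) ≤ ∫_X (η ∧ q(y)/π(y))·W(y)·π(y) μ(dy) − (1 − ψ(η))·(q(x)/π(x))·W(x). -/

import Mathlib

open MeasureTheory Filter Set
open scoped ENNReal

noncomputable section

variable {X : Type*} [MeasurableSpace X]

/-- Acceptance probability of the independence sampler:
`a(x,y) = min((q(x)/π(x))·(π(y)/q(y)), 1)`. -/
def isa (π q : X → ℝ) (x y : X) : ℝ := min (q x / π x * (π y / q y)) 1

/-- The independence sampler kernel: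
`P(x,A) = ∫_A a(x,y) q(y) μ(dy) + 1_A(x) ∫ (1 - a(x,y)) q(y) μ(dy)`. -/
def isKernel (μ : Measure X) (π q : X → ℝ) (x : X) : Measure X :=
  μ.withDensity (fun y => ENNReal.ofReal (isa π q x y * q y)) +
    (∫⁻ y, ENNReal.ofReal ((1 - isa π q x y) * q y) ∂μ) • Measure.dirac x

/-- `C_η = {x : q(x)/π(x) ≥ η}`. -/
def Cset (π q : X → ℝ) (η : ℝ) : Set X := {y | η ≤ q y / π y}

/-- `ψ(η) = 1 - π(C_η)`. -/
def psiFn (μ : Measure X) (π q : X → ℝ) (η : ℝ) : ℝ :=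
  1 - (∫⁻ y in Cset π q η, ENNReal.ofReal (π y) ∂μ).toReal

/-- for any measurable `W : X → [0,∞)`, `η > 0` and `x ∉ C_η`, the
independence sampler kernel satisfies
`PW(x) - W(x) ≤ ∫ (η ∧ q/π)(y) W(y) π(y) μ(dy) - (1 - ψ(η))·(q(x)/π(x))·W(x)`,
stated here in `[0,∞]` in the equivalent additive form. -/
theorem stmt13 (μ : Measure X) [SigmaFinite μ]
    (π q : X → ℝ) (hπm : Measurable π) (hqm : Measurable q)
    (hπpos : ∀ y, 0 < π y) (hqpos : ∀ y, 0 < q y)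
    (hπ1 : ∫⁻ y, ENNReal.ofReal (π y) ∂μ = 1) (hq1 : ∫⁻ y, ENNReal.ofReal (q y) ∂μ = 1) :
    ∀ W : X → ℝ, Measurable W → (∀ y, 0 ≤ W y) →
      ∀ η : ℝ, 0 < η → ∀ x, x ∉ Cset π q η →
        (∫⁻ y, ENNReal.ofReal (W y) ∂(isKernel μ π q x))
            + ENNReal.ofReal ((1 - psiFn μ π q η) * (q x / π x) * W x) ≤
          ENNReal.ofReal (W x)
            + ∫⁻ y, ENNReal.ofReal (min η (q y / π y) * W y * π y) ∂μ := by
  intro W hWm hW0 η hη x hx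
  have hxlt : q x / π x < η := not_le.mp hx
  have hr0 : 0 ≤ q x / π x := div_nonneg (hqpos x).le (hπpos x).le
  have hisa_m : Measurable (fun y => isa π q x y) :=
    (measurable_const.mul (hπm.div hqm)).min measurable_const
  have hisa0 : ∀ y, 0 ≤ isa π q x y := fun y =>
    le_min (mul_nonneg hr0 (div_nonneg (hπpos y).le (hqpos y).le)) zero_le_one
  have hisa1 : ∀ y, isa π q x y ≤ 1 := fun y => min_le_right _ _
  have haq : ∀ y, isa π q x y * q y = min (q x / π x * π y) (q y) := by
    intro y
    have hq0 : (0:ℝ) ≤ q y := (hqpos y).le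
    rw [isa, min_mul_of_nonneg _ _ hq0, one_mul, mul_assoc,
      div_mul_cancel₀ _ (hqpos y).ne']
  -- kernel integral
  set A : ℝ≥0∞ := ∫⁻ y, ENNReal.ofReal (isa π q x y * q y) ∂μ with hA
  set J : ℝ≥0∞ := ∫⁻ y, ENNReal.ofReal ((1 - isa π q x y) * q y) ∂μ with hJ
  set AW : ℝ≥0∞ := ∫⁻ y, ENNReal.ofReal (isa π q x y * q y * W y) ∂μ with hAW
  have hdens : Measurable (fun y => ENNReal.ofReal (isa π q x y * q y)) :=
    (hisa_m.mul hqm).ennreal_ofReal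
  have hkernel : (∫⁻ y, ENNReal.ofReal (W y) ∂(isKernel μ π q x))
      = AW + J * ENNReal.ofReal (W x) := by
    rw [isKernel, lintegral_add_measure, lintegral_smul_measure,
      lintegral_dirac' x hWm.ennreal_ofReal,
      lintegral_withDensity_eq_lintegral_mul μ hdens hWm.ennreal_ofReal]
    congr 1
    refine lintegral_congr fun y => ?_
    simp only [Pi.mul_apply]
    rw [← ENNReal.ofReal_mul (mul_nonneg (hisa0 y) (hqpos y).le)]
  -- A + J = 1
  have hAJ : A + J = 1 := by
    rw [hA, hJ, ← lintegral_add_left (hdens)]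
    rw [← hq1]
    refine lintegral_congr fun y => ?_
    rw [← ENNReal.ofReal_add (mul_nonneg (hisa0 y) (hqpos y).le)
      (mul_nonneg (by linarith [hisa1 y]) (hqpos y).le)]
    ring_nf
  -- Pi := ∫_{C} π
  set Pi : ℝ≥0∞ := ∫⁻ y in Cset π q η, ENNReal.ofReal (π y) ∂μ with hPi
  have hPile : Pi ≤ 1 := hπ1 ▸ setLIntegral_le_lintegral _ _
  have hPifin : Pi ≠ ∞ := (lt_of_le_of_lt hPile (by norm_num)).ne
  -- c ≤ A
  have hcA : ENNReal.ofReal (q x / π x) * Pi ≤ A := by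
    calc ENNReal.ofReal (q x / π x) * Pi
        = ∫⁻ y in Cset π q η, ENNReal.ofReal (q x / π x * π y) ∂μ := by
          rw [hPi, ← lintegral_const_mul _ hπm.ennreal_ofReal]
          refine lintegral_congr fun y => ?_
          rw [ENNReal.ofReal_mul hr0]
      _ ≤ ∫⁻ y in Cset π q η, ENNReal.ofReal (isa π q x y * q y) ∂μ := by
          refine setLIntegral_mono (hisa_m.mul hqm).ennreal_ofReal fun y hy => ?_
          refine ENNReal.ofReal_le_ofReal ?_
          rw [haq y]
          refine le_min le_rfl ?_
          have hy' : η ≤ q y / π y := hy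
          have := (div_le_div_iff₀ (hπpos x) (hπpos y)).mp (le_of_lt (lt_of_lt_of_le hxlt hy'))
          calc q x / π x * π y = q x * π y / π x := by ring
            _ ≤ q y := by
              rw [div_le_iff₀ (hπpos x)]
              linarith
      _ ≤ A := setLIntegral_le_lintegral _ _
  -- rewrite the psiFn term
  have hψ : ENNReal.ofReal ((1 - psiFn μ π q η) * (q x / π x) * W x)
      = ENNReal.ofReal (q x / π x) * Pi * ENNReal.ofReal (W x) := by
    have h1ψ : 1 - psiFn μ π q η = Pi.toReal := by
      rw [psiFn]; ring
    rw [h1ψ, ENNReal.ofReal_mul (mul_nonneg ENNReal.toReal_nonneg hr0),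
      ENNReal.ofReal_mul ENNReal.toReal_nonneg, ENNReal.ofReal_toReal hPifin,
      mul_comm Pi]
  -- pointwise bound AW ≤ M
  have hAWM : AW ≤ ∫⁻ y, ENNReal.ofReal (min η (q y / π y) * W y * π y) ∂μ := by
    refine lintegral_mono fun y => ENNReal.ofReal_le_ofReal ?_
    rw [haq y]
    have hπy := hπpos y
    have : min η (q y / π y) * W y * π y = min (η * π y) (q y) * W y := by
      rw [mul_right_comm, min_mul_of_nonneg _ _ hπy.le,
        div_mul_cancel₀ _ hπy.ne']
    rw [this]
    exact mul_le_mul_of_nonneg_right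
      (min_le_min (mul_le_mul_of_nonneg_right hxlt.le hπy.le) le_rfl) (hW0 y)
  -- conclude
  rw [hkernel, hψ]
  calc AW + J * ENNReal.ofReal (W x) + ENNReal.ofReal (q x / π x) * Pi * ENNReal.ofReal (W x)
      ≤ AW + J * ENNReal.ofReal (W x) + A * ENNReal.ofReal (W x) :=
        add_le_add_right (mul_le_mul_left hcA _) _
    _ = AW + (J + A) * ENNReal.ofReal (W x) := by ring
    _ = AW + ENNReal.ofReal (W x) := by rw [add_comm J A, hAJ, one_mul]
    _ ≤ (∫⁻ y, ENNReal.ofReal (min η (q y / π y) * W y * π y) ∂μ) + ENNReal.ofReal (W x) :=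
        add_le_add_left hAWM _
    _ = _ := add_comm _ _
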